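/- For all natural numbers m < n, we have G_m ≤ G_n and it is not the case that G_n ≤ G_m; in particular, the games G_0, G_1, G_2, … are pairwise non-equivalent. -/

import Mathlib

universe u

namespace SetTheory

/-- Pre-game (removed from Mathlib; restated with its old Mathlib definition). -/
inductive PGame : Type (u + 1)
  | mk : ∀ α β : Type u, (α → PGame) → (β → PGame) → PGame

namespace PGame

/-- The pre-game `0 = { | }`, as in the old Mathlib. -/
instance : Zero PGame :=
  ⟨⟨PEmpty, PEmpty, PEmpty.elim, PEmpty.elim⟩⟩

end PGame

end SetTheory

/-- Combinatorial games over a poset `A` of atoms: either an atomic game `[a]` for an atom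
`a : A`, or a composite game `⟨L|R⟩` where `L` and `R` are nonempty families of games
(the left and right options). -/
inductive PoGame (A : Type u) : Type (u + 1) where
  | atom : A → PoGame A
  | mk : (xl xr : Type u) → (xl → PoGame A) → (xr → PoGame A) →
      Nonempty xl → Nonempty xr → PoGame A

namespace PoGame

variable {A : Type u}

/-- `G` is an atomic game. -/
def IsAtomic : PoGame A → Prop
  | atom _ => True
  | mk _ _ _ _ _ _ => False

/-- `G` is a left option of the game given as second argument. -/
def IsLeftOption (G : PoGame A) : PoGame A → Prop
  | atom _ => False
  | mk _ _ L _ _ _ => ∃ i, L i = G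

/-- `G` is a right option of the game given as second argument. -/
def IsRightOption (G : PoGame A) : PoGame A → Prop
  | atom _ => False
  | mk _ _ _ R _ _ => ∃ j, R j = G

section Order

variable [PartialOrder A]

mutual
  /-- `Le G H` is the relation `G ≤ H` on games over the poset `A`, defined by mutual
  recursion with `Lf` (the relation `G ⊲ H`): `G ≤ H` iff every left option `G^L`
  satisfies `G^L ⊲ H`, every right option `H^R` satisfies `G ⊲ H^R`, and if `G` or `H`
  is atomic then `G ⊲ H`. -/
  inductive Le : PoGame A → PoGame A → Prop
    | intro (G H : PoGame A)
        (hL : ∀ G', IsLeftOption G' G → Lf G' H)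
        (hR : ∀ H', IsRightOption H' H → Lf G H')
        (hA : IsAtomic G ∨ IsAtomic H → Lf G H) : Le G H

  /-- `Lf G H` is the relation `G ⊲ H` on games over the poset `A`: it holds iff some
  right option `G^R` satisfies `G^R ≤ H`, or some left option `H^L` satisfies `G ≤ H^L`,
  or `G = [a]` and `H = [b]` are atomic with `a ≤ b` in `A`. -/
  inductive Lf : PoGame A → PoGame A → Prop
    | rightOption (G H G' : PoGame A) (h : IsRightOption G' G) (hle : Le G' H) : Lf G H
    | leftOption (G H H' : PoGame A) (h : IsLeftOption H' H) (hle : Le G H') : Lf G H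
    | atom (a b : A) (hab : a ≤ b) : Lf (atom a) (atom b)
end

/-- Two games are equivalent if `G ≤ H` and `H ≤ G`. -/
def GEquiv (G H : PoGame A) : Prop := Le G H ∧ Le H G

/-- `G` is locally monotone if `G ≤ G^L` for every left option `G^L` and `G^R ≤ G` for
every right option `G^R`. -/
def LocallyMonotone (G : PoGame A) : Prop :=
  (∀ G', IsLeftOption G' G → Le G G') ∧ (∀ G', IsRightOption G' G → Le G' G)

/-- `G` is an option (left or right) of `H`. -/
def IsOption (G H : PoGame A) : Prop := IsLeftOption G H ∨ IsRightOption G H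

/-- `G` is a position of `H`: `H` itself, an option of `H`, an option of an option, etc. -/
def IsPosition (G H : PoGame A) : Prop := Relation.ReflTransGen IsOption G H

/-- `G` is monotone if every position of `G` is locally monotone. -/
def Monotone (G : PoGame A) : Prop := ∀ K, IsPosition K G → LocallyMonotone K

end Order

/-- The 5-element linearly ordered set `L5 = {-3, -2, -1, 0, 1}`. -/
abbrev L5 : Type := {a : ℤ // -3 ≤ a ∧ a ≤ 1}

/-- `G` has mean `C`: an atomic game `[a]` has mean `a`, and a composite game has mean `C`
iff every left option has mean `C + 1` and every right option has mean `C - 1`. -/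
def HasMean : PoGame L5 → ℤ → Prop
  | atom a, C => (a : ℤ) = C
  | mk _ _ L R _ _, C => (∀ i, HasMean (L i) (C + 1)) ∧ (∀ j, HasMean (R j) (C - 1))

/-- The game `⟨G | H⟩` with a single left option `G` and a single right option `H`. -/
def ofPair (G H : PoGame A) : PoGame A :=
  mk PUnit PUnit (fun _ => G) (fun _ => H) ⟨PUnit.unit⟩ ⟨PUnit.unit⟩

/-- `⋆ = ⟨-1 | -3⟩`. -/
def star : PoGame L5 := ofPair (atom ⟨-1, by norm_num⟩) (atom ⟨-3, by norm_num⟩)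

/-- `M(G) = ⟨1 | G⟩`. -/
def M (G : PoGame L5) : PoGame L5 := ofPair (atom ⟨1, by norm_num⟩) G

/-- `P(G) = ⟨G | -2⟩`. -/
def P (G : PoGame L5) : PoGame L5 := ofPair G (atom ⟨-2, by norm_num⟩)

/-- `P⋆(G) = ⟨G | ⋆⟩`. -/
def Pstar (G : PoGame L5) : PoGame L5 := ofPair G star

/-- `Pn n G = P G` if `n` is odd, `P⋆ G` if `n` is even. -/
def Pn (n : ℕ) (G : PoGame L5) : PoGame L5 := if Odd n then P G else Pstar G

/-- The sequence `G_0 = [0]`, `G_{n+1} = M (Pn n (G_n))`. -/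
def Gseq : ℕ → PoGame L5
  | 0 => atom ⟨0, by norm_num⟩
  | n + 1 => M (Pn n (Gseq n))

/-- The normal-play game obtained from a game over `L5` by replacing every atom by the
normal-play game `0 = { | }`, keeping the tree of left and right options. -/
def np : PoGame L5 → SetTheory.PGame.{0}
  | atom _ => 0
  | mk xl xr L R _ _ => SetTheory.PGame.mk xl xr (fun i => np (L i)) (fun j => np (R j))

end PoGame

namespace PoGame
section AuxGeneral

variable {A : Type u}

theorem isLeftOption_ofPair {X Y Z : PoGame A} : IsLeftOption Z (ofPair X Y) ↔ Z = X := by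
  unfold ofPair IsLeftOption
  constructor
  · rintro ⟨i, h⟩; exact h.symm
  · rintro rfl; exact ⟨PUnit.unit, rfl⟩

theorem isRightOption_ofPair {X Y Z : PoGame A} : IsRightOption Z (ofPair X Y) ↔ Z = Y := by
  unfold ofPair IsRightOption
  constructor
  · rintro ⟨i, h⟩; exact h.symm
  · rintro rfl; exact ⟨PUnit.unit, rfl⟩

variable [PartialOrder A]

theorem le_refl' : ∀ G : PoGame A, Le G G := by
  intro G
  induction G with
  | atom a =>
      exact Le.intro _ _ (fun _ h => h.elim) (fun _ h => h.elim) (fun _ => Lf.atom a a le_rfl)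
  | mk xl xr L R h1 h2 IHL IHR =>
      refine Le.intro _ _ ?_ ?_ ?_
      · rintro G' ⟨i, rfl⟩
        exact Lf.leftOption _ _ (L i) ⟨i, rfl⟩ (IHL i)
      · rintro H' ⟨j, rfl⟩
        exact Lf.rightOption _ _ (R j) ⟨j, rfl⟩ (IHR j)
      · rintro (h | h) <;> exact h.elim

theorem atom_le' {a b : A} (h : a ≤ b) : Le (atom a) (atom b) :=
  Le.intro _ _ (fun _ h' => h'.elim) (fun _ h' => h'.elim) (fun _ => Lf.atom a b h)

theorem not_lf_atom' {a b : A} (h : ¬ a ≤ b) : ¬ Lf (atom a) (atom b) := by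
  intro hlf
  cases hlf with
  | rightOption _ _ G' h' _ => exact h'.elim
  | leftOption _ _ H' h' _ => exact h'.elim
  | atom _ _ hab => exact h hab

theorem not_le_atom' {a b : A} (h : ¬ a ≤ b) : ¬ Le (atom a) (atom b) := by
  intro hle
  cases hle with
  | intro _ _ hL hR hA => exact not_lf_atom' h (hA (Or.inl trivial))

end AuxGeneral
section AuxL5

abbrev la1 : L5 := ⟨1, by norm_num⟩
abbrev la0 : L5 := ⟨0, by norm_num⟩
abbrev lam1 : L5 := ⟨-1, by norm_num⟩
abbrev lam2 : L5 := ⟨-2, by norm_num⟩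
abbrev lam3 : L5 := ⟨-3, by norm_num⟩

/-- `tg n` is the right option of `Pn n G`. -/
def tg (n : ℕ) : PoGame L5 := if Odd n then atom lam2 else star

/-- `Hs n = Pn n (Gseq n)`, the right option of `Gseq (n+1)`. -/
def Hs (n : ℕ) : PoGame L5 := ofPair (Gseq n) (tg n)

theorem Gseq_succ (n : ℕ) : Gseq (n + 1) = ofPair (atom la1) (Hs n) := by
  show M (Pn n (Gseq n)) = _
  unfold M Hs Pn tg P Pstar
  by_cases h : Odd n <;> simp [h]

theorem notLf_negone : ∀ n, ¬ Lf (Gseq n) (atom lam1) := by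
  intro n
  induction n with
  | zero =>
      exact not_lf_atom' (fun hab => by simpa using Subtype.mk_le_mk.mp hab)
  | succ n IH =>
      rw [Gseq_succ]
      intro hlf
      cases hlf with
      | rightOption _ _ G' h' hle =>
          rw [isRightOption_ofPair] at h'
          subst h'
          cases hle with
          | intro _ _ hL hR hA =>
              exact IH (hL (Gseq n) (by unfold Hs; exact isLeftOption_ofPair.mpr rfl))
      | leftOption _ _ H' h' hle => exact h'.elim

theorem not_le_am2_star : ¬ Le (atom lam2) star := by
  intro hle
  cases hle with
  | intro _ _ hL hR hA =>
      have h := hR (atom lam3) (by unfold star; exact isRightOption_ofPair.mpr rfl)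
      exact not_lf_atom' (fun hab => by simpa using Subtype.mk_le_mk.mp hab) h

theorem not_le_star_am2 : ¬ Le star (atom lam2) := by
  intro hle
  cases hle with
  | intro _ _ hL hR hA =>
      have h := hL (atom lam1) (by unfold star; exact isLeftOption_ofPair.mpr rfl)
      exact not_lf_atom' (fun hab => by simpa using Subtype.mk_le_mk.mp hab) h

theorem notLf_H_tg {k j : ℕ} (hp : ¬ (Odd k ↔ Odd j)) : ¬ Lf (Hs k) (tg j) := by
  by_cases hj : Odd j
  · have hk : ¬ Odd k := fun h => hp ⟨fun _ => hj, fun _ => h⟩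
    have e1 : tg j = atom lam2 := by simp [tg, hj]
    have e2 : tg k = star := by simp [tg, hk]
    intro hlf
    rw [e1] at hlf
    unfold Hs at hlf
    cases hlf with
    | rightOption _ _ G' h' hle =>
        rw [isRightOption_ofPair] at h'
        subst h'
        rw [e2] at hle
        exact not_le_star_am2 hle
    | leftOption _ _ H' h' hle => exact h'.elim
  · have hk : Odd k := by
      by_contra h
      exact hp (iff_of_false h hj)
    have e1 : tg j = star := by simp [tg, hj]
    have e2 : tg k = atom lam2 := by simp [tg, hk]
    intro hlf
    rw [e1] at hlf
    unfold Hs at hlf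
    cases hlf with
    | rightOption _ _ G' h' hle =>
        rw [isRightOption_ofPair] at h'
        subst h'
        rw [e2] at hle
        exact not_le_am2_star hle
    | leftOption _ _ H' h' hle =>
        unfold star at h'
        rw [isLeftOption_ofPair] at h'
        subst h'
        cases hle with
        | intro _ _ hL hR hA =>
            exact notLf_negone k (hL (Gseq k) (isLeftOption_ofPair.mpr rfl))

end AuxL5
section MainL5

theorem le_Gseq : ∀ n m : ℕ, m ≤ n → Le (Gseq m) (Gseq n) := by
  intro n
  induction n with
  | zero => intro m hm; rw [Nat.le_zero.mp hm]; exact le_refl' _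
  | succ n IH =>
      intro m hm
      rcases Nat.eq_or_lt_of_le hm with rfl | hm'
      · exact le_refl' _
      · have hmn : m ≤ n := by omega
        rw [Gseq_succ]
        refine Le.intro _ _ ?_ ?_ ?_
        · intro G' hG'
          cases m with
          | zero => exact hG'.elim
          | succ m' =>
              rw [Gseq_succ, isLeftOption_ofPair] at hG'
              subst hG'
              exact Lf.leftOption _ _ (atom la1) (isLeftOption_ofPair.mpr rfl) (le_refl' _)
        · intro H' hH'
          rw [isRightOption_ofPair] at hH'
          subst hH'
          exact Lf.leftOption _ _ (Gseq n) (by unfold Hs; exact isLeftOption_ofPair.mpr rfl)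
            (IH m hmn)
        · rintro (h | h)
          · cases m with
            | zero =>
                exact Lf.leftOption _ _ (atom la1) (isLeftOption_ofPair.mpr rfl)
                  (atom_le' (Subtype.mk_le_mk.mpr (by norm_num)))
            | succ m' => rw [Gseq_succ] at h; exact h.elim
          · exact h.elim

theorem Qstep {k j : ℕ} (houter : j + 2 ≤ k → ¬ Lf (Gseq k) (Hs j))
    (hR0 : ¬ Le (Gseq (k + 1)) (Gseq j)) (hkj : j + 2 ≤ k + 1) :
    ¬ Lf (Gseq (k + 1)) (Hs j) := by
  intro hlf
  rw [Gseq_succ] at hlf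
  unfold Hs at hlf
  cases hlf with
  | rightOption _ _ G' h' hle =>
      rw [isRightOption_ofPair] at h'
      subst h'
      by_cases hp : Odd k ↔ Odd j
      · have hne : k ≠ j + 1 := by
          rintro rfl
          rw [Nat.odd_add_one] at hp
          by_cases h : Odd j
          · exact hp.mpr h h
          · exact h (hp.mp h)
        have hk2 : j + 2 ≤ k := by omega
        cases hle with
        | intro _ _ hL hR hA =>
            exact houter hk2 (hL (Gseq k) (isLeftOption_ofPair.mpr rfl))
      · cases hle with
        | intro _ _ hL hR hA =>
            exact notLf_H_tg hp (hR (tg j) (isRightOption_ofPair.mpr rfl))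
  | leftOption _ _ H' h' hle =>
      rw [isLeftOption_ofPair] at h'
      subst h'
      exact hR0 (by rw [Gseq_succ]; exact hle)

theorem neg_main : ∀ k j : ℕ,
    (j < k → ¬ Le (Gseq k) (Gseq j)) ∧ (j + 2 ≤ k → ¬ Lf (Gseq k) (Hs j)) := by
  intro k
  induction k with
  | zero => exact fun j => ⟨fun h => absurd h (by omega), fun h => absurd h (by omega)⟩
  | succ k IHk =>
      intro j
      induction j with
      | zero =>
          have R0 : ¬ Le (Gseq (k + 1)) (Gseq 0) := by
            rw [Gseq_succ]
            intro hle
            cases hle with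
            | intro _ _ hL hR hA =>
                exact not_lf_atom' (fun hab => by simpa using Subtype.mk_le_mk.mp hab)
                  (hL (atom la1) (isLeftOption_ofPair.mpr rfl))
          exact ⟨fun _ => R0, fun h2 => Qstep (IHk 0).2 R0 h2⟩
      | succ j IHj =>
          have Rj : j + 1 < k + 1 → ¬ Le (Gseq (k + 1)) (Gseq (j + 1)) := by
            intro hj hle
            rw [Gseq_succ j] at hle
            cases hle with
            | intro _ _ hL hR hA =>
                exact IHj.2 (by omega) (hR (Hs j) (isRightOption_ofPair.mpr rfl))
          exact ⟨Rj, fun h2 => Qstep (IHk (j + 1)).2 (Rj (by omega)) h2⟩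

end MainL5
end PoGame

open PoGame in
/-- For all `m < n`, `G_m ≤ G_n` and not `G_n ≤ G_m`; in particular, the games
`G_0, G_1, G_2, …` are pairwise non-equivalent. -/
theorem stmt_14 :
    (∀ m n : ℕ, m < n → Le (Gseq m) (Gseq n) ∧ ¬ Le (Gseq n) (Gseq m)) ∧
    (∀ m n : ℕ, m ≠ n → ¬ GEquiv (Gseq m) (Gseq n)) := by
  constructor
  · intro m n h
    exact ⟨le_Gseq n m h.le, (neg_main n m).1 h⟩
  · intro m n h heq
    unfold GEquiv at heq
    rcases Nat.lt_or_ge m n with h' | h'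
    · exact (neg_main n m).1 h' heq.2
    · exact (neg_main m n).1 (lt_of_le_of_ne h' (Ne.symm h)) heq.1
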